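/- Triangle condition at the origin: Let A, B ∈ V be adjacent vertices with h(A) = h(B) = m ≥ 1, where h is the height. Then there exists C ∈ V adjacent to both A and B with h(C) = m − 1. -/

import Mathlib

open Finset

/-- The vertex set of the 1-skeleton of the Ã_n Coxeter complex:
integer vectors summing to zero with all pairwise coordinate differences divisible by n+1. -/
def inV (n : ℕ) (x : Fin (n+1) → ℤ) : Prop :=
  (∑ i, x i = 0) ∧ ∀ i j, ((n : ℤ) + 1) ∣ x i - x j

/-- Maximum coordinate. -/
def maxC (n : ℕ) (x : Fin (n+1) → ℤ) : ℤ := univ.sup' univ_nonempty x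

/-- Minimum coordinate. -/
def minC (n : ℕ) (x : Fin (n+1) → ℤ) : ℤ := univ.inf' univ_nonempty x

/-- An edge vector: coordinates sum to 0, pairwise differences divisible by n+1,
and max minus min equals n+1. -/
def isEdge (n : ℕ) (e : Fin (n+1) → ℤ) : Prop :=
  inV n e ∧ maxC n e - minC n e = (n : ℤ) + 1

/-- Height of a vertex: (max − min)/(n+1). -/
def height (n : ℕ) (x : Fin (n+1) → ℤ) : ℤ :=
  (maxC n x - minC n x) / ((n : ℤ) + 1)

/-- The edge vector associated to a subset S: value n+1−|S| on S and −|S| off S. -/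
def eVec (n : ℕ) (S : Finset (Fin (n+1))) : Fin (n+1) → ℤ :=
  fun i => if i ∈ S then (n : ℤ) + 1 - S.card else -(S.card : ℤ)

lemma inV_zero (n : ℕ) : inV n 0 := ⟨by simp, fun i j => by simp⟩

lemma maxC_neg (n : ℕ) (x : Fin (n+1) → ℤ) : maxC n (-x) = - minC n x := by
  unfold maxC minC
  apply le_antisymm
  · apply Finset.sup'_le
    intro i hi
    have h1 : univ.inf' univ_nonempty x ≤ x i := Finset.inf'_le _ hi
    have h2 : (-x) i = -(x i) := rfl
    omega
  · obtain ⟨i, hi, h⟩ := Finset.exists_mem_eq_inf' (univ_nonempty) x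
    rw [h]
    have h1 : (-x) i ≤ univ.sup' univ_nonempty (-x) := Finset.le_sup' (-x) hi
    have h2 : (-x) i = -(x i) := rfl
    omega

lemma minC_neg (n : ℕ) (x : Fin (n+1) → ℤ) : minC n (-x) = - maxC n x := by
  have := maxC_neg n (-x)
  rw [neg_neg] at this
  unfold maxC minC at *
  omega

lemma isEdge_neg {n : ℕ} {e : Fin (n+1) → ℤ} (h : isEdge n e) : isEdge n (-e) := by
  obtain ⟨⟨h1, h2⟩, h3⟩ := h
  refine ⟨⟨by simp [h1], fun i j => by
    have h' : (-e) i - (-e) j = e j - e i := by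
      simp only [Pi.neg_apply]; ring
    rw [h']; exact h2 j i⟩, ?_⟩
  rw [maxC_neg, minC_neg]
  omega

/-- The graph G on V with edge-vector adjacency. -/
def G (n : ℕ) : SimpleGraph {x : Fin (n+1) → ℤ // inV n x} where
  Adj x y := isEdge n (y.1 - x.1)
  symm := by
    constructor
    intro x y h
    have := isEdge_neg h
    rwa [neg_sub] at this
  loopless := by
    constructor
    intro x h
    obtain ⟨-, h3⟩ := h
    rw [sub_self] at h3
    simp [maxC, minC] at h3
    omega

section Aux

variable {n : ℕ}

lemma le_maxC (x : Fin (n+1) → ℤ) (i : Fin (n+1)) : x i ≤ maxC n x :=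
  Finset.le_sup' x (mem_univ i)

lemma minC_le (x : Fin (n+1) → ℤ) (i : Fin (n+1)) : minC n x ≤ x i :=
  Finset.inf'_le x (mem_univ i)

lemma maxC_le {x : Fin (n+1) → ℤ} {a : ℤ} (h : ∀ i, x i ≤ a) : maxC n x ≤ a :=
  Finset.sup'_le _ _ fun i _ => h i

lemma le_minC {x : Fin (n+1) → ℤ} {a : ℤ} (h : ∀ i, a ≤ x i) : a ≤ minC n x :=
  Finset.le_inf' _ _ fun i _ => h i

lemma exists_maxC (x : Fin (n+1) → ℤ) : ∃ i, x i = maxC n x := by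
  obtain ⟨i, _, h⟩ := Finset.exists_mem_eq_sup' (univ_nonempty) x
  exact ⟨i, h.symm⟩

lemma exists_minC (x : Fin (n+1) → ℤ) : ∃ i, x i = minC n x := by
  obtain ⟨i, _, h⟩ := Finset.exists_mem_eq_inf' (univ_nonempty) x
  exact ⟨i, h.symm⟩

lemma card_compl_int (S : Finset (Fin (n+1))) : ((Sᶜ).card : ℤ) = (n : ℤ) + 1 - S.card := by
  have h1 : (Sᶜ).card = (n+1) - S.card := by simp [Finset.card_compl]
  have h2 : S.card ≤ n + 1 := by simpa using Finset.card_le_univ S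
  omega

lemma eVec_sum (S : Finset (Fin (n+1))) : ∑ i, eVec n S i = 0 := by
  have h1 : ∑ i ∈ S, eVec n S i + ∑ i ∈ Sᶜ, eVec n S i = ∑ i, eVec n S i :=
    Finset.sum_add_sum_compl S _
  have e2 : ∀ i ∈ S, eVec n S i = ((n : ℤ) + 1 - S.card) := fun i hi => by simp [eVec, hi]
  have e3 : ∀ i ∈ Sᶜ, eVec n S i = (-(S.card : ℤ)) := fun i hi => by
    simp only [Finset.mem_compl] at hi
    simp [eVec, hi]
  rw [Finset.sum_congr rfl e2, Finset.sum_congr rfl e3, Finset.sum_const, Finset.sum_const,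
    nsmul_eq_mul, nsmul_eq_mul, card_compl_int] at h1
  rw [← h1]
  ring

lemma eVec_dvd (S : Finset (Fin (n+1))) (i j : Fin (n+1)) :
    ((n : ℤ) + 1) ∣ eVec n S i - eVec n S j := by
  unfold eVec
  split_ifs with h1 h2 h2
  · simp
  · exact ⟨1, by ring⟩
  · exact ⟨-1, by ring⟩
  · simp

lemma inV_eVec (S : Finset (Fin (n+1))) : inV n (eVec n S) :=
  ⟨eVec_sum S, eVec_dvd S⟩

lemma maxC_eVec {S : Finset (Fin (n+1))} (hS : S.Nonempty) :
    maxC n (eVec n S) = (n : ℤ) + 1 - S.card := by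
  obtain ⟨i, hi⟩ := hS
  apply le_antisymm
  · apply maxC_le
    intro j
    unfold eVec
    split_ifs <;> omega
  · have := le_maxC (eVec n S) i
    simpa [eVec, hi] using this

lemma minC_eVec {S : Finset (Fin (n+1))} (hS : S ≠ univ) :
    minC n (eVec n S) = -(S.card : ℤ) := by
  obtain ⟨i, hi⟩ : ∃ i, i ∉ S := by
    by_contra h
    push_neg at h
    exact hS (Finset.eq_univ_iff_forall.2 h)
  apply le_antisymm
  · have := minC_le (eVec n S) i
    simpa [eVec, hi] using this
  · apply le_minC
    intro j
    unfold eVec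
    split_ifs <;> omega

lemma isEdge_eVec {S : Finset (Fin (n+1))} (hS : S.Nonempty) (hS' : S ≠ univ) :
    isEdge n (eVec n S) := by
  refine ⟨inV_eVec S, ?_⟩
  rw [maxC_eVec hS, minC_eVec hS']
  ring

lemma height_mul {x : Fin (n+1) → ℤ} (hx : inV n x) :
    maxC n x - minC n x = height n x * ((n : ℤ) + 1) := by
  obtain ⟨i, hi⟩ := exists_maxC x
  obtain ⟨j, hj⟩ := exists_minC x
  have hd : ((n : ℤ) + 1) ∣ maxC n x - minC n x := by
    rw [← hi, ← hj]; exact hx.2 i j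
  unfold height
  exact (Int.ediv_mul_cancel hd).symm

lemma eVec_sub {S T : Finset (Fin (n+1))} (hTS : T ⊆ S) :
    eVec n S - eVec n T = eVec n (S \ T) := by
  have hcard : ((S \ T).card : ℤ) = (S.card : ℤ) - T.card := by
    have := Finset.card_sdiff_of_subset hTS
    have := Finset.card_le_card hTS
    omega
  funext i
  simp only [Pi.sub_apply, eVec, Finset.mem_sdiff, hcard]
  by_cases h1 : i ∈ S
  · by_cases h2 : i ∈ T <;> simp [h1, h2] <;> ring
  · have h2 : i ∉ T := fun hh => h1 (hTS hh)
    simp [h1, h2]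
    ring

lemma edge_decomp {e : Fin (n+1) → ℤ} (he : isEdge n e) :
    ∃ S : Finset (Fin (n+1)), S.Nonempty ∧ S ≠ univ ∧ e = eVec n S := by
  obtain ⟨⟨hsum, hdvd⟩, hrange⟩ := he
  have hNpos : (0 : ℤ) < (n : ℤ) + 1 := by positivity
  obtain ⟨j0, hj0⟩ := exists_minC e
  obtain ⟨i0, hi0⟩ := exists_maxC e
  set μ := minC n e with hμ
  have key : ∀ i, e i = μ ∨ e i = μ + ((n : ℤ) + 1) := by
    intro i
    have h1 : μ ≤ e i := minC_le e i
    have h2 : e i ≤ μ + ((n : ℤ) + 1) := by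
      have := le_maxC e i; omega
    obtain ⟨k, hk⟩ : ((n : ℤ) + 1) ∣ e i - μ := by rw [← hj0]; exact hdvd i j0
    have hk0 : 0 ≤ k := by nlinarith
    have hk1 : k ≤ 1 := by nlinarith
    interval_cases k <;> omega
  have hall_nonneg : ¬ (0 ≤ μ) := by
    intro h
    have : ∀ i ∈ univ, e i = 0 := by
      rw [← Finset.sum_eq_zero_iff_of_nonneg (fun i _ => le_trans h (minC_le e i))]
      exact hsum
    have h1 := this i0 (mem_univ i0)
    have h2 := this j0 (mem_univ j0)
    omega
  have hμposN : 0 < μ + ((n : ℤ) + 1) := by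
    by_contra h
    push_neg at h
    have hnp : ∀ i ∈ univ, 0 ≤ -e i := by
      intro i _
      rcases key i with h' | h' <;> omega
    have : ∀ i ∈ univ, -e i = 0 := by
      rw [← Finset.sum_eq_zero_iff_of_nonneg hnp]
      simp [hsum]
    have h1 := this i0 (mem_univ i0)
    have h2 := this j0 (mem_univ j0)
    omega
  set S : Finset (Fin (n+1)) := univ.filter (fun i => 0 < e i) with hS
  have hmem : ∀ i, i ∈ S ↔ e i = μ + ((n : ℤ) + 1) := by
    intro i
    simp only [hS, Finset.mem_filter, mem_univ, true_and]
    rcases key i with h' | h' <;> constructor <;> intro hh <;> omega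
  have hcard : (S.card : ℤ) = -μ := by
    have h1 : ∑ i ∈ S, e i + ∑ i ∈ Sᶜ, e i = ∑ i, e i := Finset.sum_add_sum_compl S e
    have e2 : ∀ i ∈ S, e i = μ + ((n : ℤ) + 1) := fun i hi => (hmem i).1 hi
    have e3 : ∀ i ∈ Sᶜ, e i = μ := by
      intro i hi
      simp only [Finset.mem_compl] at hi
      rcases key i with h' | h'
      · exact h'
      · exact absurd ((hmem i).2 h') hi
    rw [Finset.sum_congr rfl e2, Finset.sum_congr rfl e3, Finset.sum_const, Finset.sum_const,
      nsmul_eq_mul, nsmul_eq_mul, card_compl_int, hsum] at h1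
    have h5 : ((n : ℤ) + 1) * ((S.card : ℤ) + μ) = 0 := by linear_combination h1
    rcases mul_eq_zero.1 h5 with h | h <;> omega
  refine ⟨S, ⟨i0, (hmem i0).2 (by omega)⟩, ?_, ?_⟩
  · intro h
    have : j0 ∈ S := h ▸ mem_univ j0
    have := (hmem j0).1 this
    omega
  · funext i
    simp only [eVec, hcard]
    rcases key i with h' | h'
    · have hni : i ∉ S := fun hh => by have := (hmem i).1 hh; omega
      simp only [hni, if_false]
      omega
    · have hyi : i ∈ S := (hmem i).2 h'
      simp only [hyi, if_true]
      omega

end Aux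
section Main

variable {n : ℕ}

/-- Building block: if T avoids all argmax coordinates and contains all argmin
coordinates, then A + eVec T is in V, adjacent to A, and has height one less. -/
lemma build {m : ℕ} (hm : 1 ≤ m) {A : Fin (n+1) → ℤ} (hA : inV n A)
    (hhA : height n A = (m : ℤ)) (T : Finset (Fin (n+1)))
    (hTne : T.Nonempty) (hTuniv : T ≠ univ)
    (hTmax : ∀ i ∈ T, A i ≠ maxC n A)
    (hTmin : ∀ i, i ∉ T → A i ≠ minC n A) :
    inV n (A + eVec n T) ∧ isEdge n ((A + eVec n T) - A) ∧
      height n (A + eVec n T) = (m : ℤ) - 1 := by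
  have hNpos : (0 : ℤ) < (n : ℤ) + 1 := by positivity
  obtain ⟨p0, hp0⟩ := exists_maxC A
  obtain ⟨q0, hq0⟩ := exists_minC A
  have hMm : maxC n A - minC n A = (m : ℤ) * ((n : ℤ) + 1) := by
    have := height_mul hA
    rw [hhA] at this
    exact this
  -- coordinates are max, min, or at least N away from each
  have hstep_up : ∀ i, A i ≠ maxC n A → A i ≤ maxC n A - ((n : ℤ) + 1) := by
    intro i hi
    obtain ⟨k, hk⟩ : ((n : ℤ) + 1) ∣ maxC n A - A i := by
      rw [← hp0]; exact hA.2 p0 i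
    have h1 : A i < maxC n A := lt_of_le_of_ne (le_maxC A i) hi
    have hk1 : 1 ≤ k := by nlinarith
    nlinarith
  have hstep_dn : ∀ i, A i ≠ minC n A → minC n A + ((n : ℤ) + 1) ≤ A i := by
    intro i hi
    obtain ⟨k, hk⟩ : ((n : ℤ) + 1) ∣ A i - minC n A := by
      rw [← hq0]; exact hA.2 i q0
    have h1 : minC n A < A i := lt_of_le_of_ne (minC_le A i) (Ne.symm hi)
    have hk1 : 1 ≤ k := by nlinarith
    nlinarith
  have hp0T : p0 ∉ T := fun h => hTmax p0 h hp0
  have hq0T : q0 ∈ T := by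
    by_contra h
    exact hTmin q0 h hq0
  have hval : ∀ i, (A + eVec n T) i =
      A i + (if i ∈ T then (n : ℤ) + 1 - T.card else -(T.card : ℤ)) := fun i => rfl
  have hmaxC : maxC n (A + eVec n T) = maxC n A - T.card := by
    apply le_antisymm
    · apply maxC_le
      intro i
      rw [hval]
      split_ifs with h
      · have := hstep_up i (hTmax i h)
        omega
      · have := le_maxC A i
        omega
    · have := le_maxC (A + eVec n T) p0
      rw [hval p0, if_neg hp0T, hp0] at this
      omega
  have hminC : minC n (A + eVec n T) = minC n A + ((n : ℤ) + 1) - T.card := by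
    apply le_antisymm
    · have := minC_le (A + eVec n T) q0
      rw [hval q0, if_pos hq0T, hq0] at this
      omega
    · apply le_minC
      intro i
      rw [hval]
      split_ifs with h
      · have := minC_le A i
        omega
      · have := hstep_dn i (hTmin i h)
        omega
  have hinV : inV n (A + eVec n T) := by
    constructor
    · have h1 : ∑ i, (A + eVec n T) i = ∑ i, A i + ∑ i, eVec n T i := by
        rw [← Finset.sum_add_distrib]
        rfl
      rw [h1, hA.1, eVec_sum]
      simp
    · intro i j
      have h2 : (A + eVec n T) i - (A + eVec n T) j =
          (A i - A j) + (eVec n T i - eVec n T j) := by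
        simp only [Pi.add_apply]; ring
      rw [h2]
      exact dvd_add (hA.2 i j) (eVec_dvd T i j)
  refine ⟨hinV, ?_, ?_⟩
  · have : (A + eVec n T) - A = eVec n T := by
      funext i; simp
    rw [this]
    exact isEdge_eVec hTne hTuniv
  · unfold height
    rw [hmaxC, hminC]
    have h3 : maxC n A - ↑(#T) - (minC n A + ((n : ℤ) + 1) - ↑(#T)) =
        ((m : ℤ) - 1) * ((n : ℤ) + 1) := by
      rw [sub_mul]
      omega
    rw [h3]
    exact Int.mul_ediv_cancel _ (by omega)

end Main
/-- triangle condition at the origin. -/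
theorem stmt8 (n : ℕ) (hn : 1 ≤ n) (m : ℕ) (hm : 1 ≤ m)
    (A B : Fin (n+1) → ℤ) (hA : inV n A) (hB : inV n B)
    (hAB : isEdge n (B - A))
    (hhA : height n A = (m : ℤ)) (hhB : height n B = (m : ℤ)) :
    ∃ C : Fin (n+1) → ℤ, inV n C ∧ isEdge n (C - A) ∧ isEdge n (C - B) ∧
      height n C = (m : ℤ) - 1 := by
  have hNpos : (0 : ℤ) < (n : ℤ) + 1 := by positivity
  obtain ⟨S, hSne, hSuniv, hES⟩ := edge_decomp hAB
  obtain ⟨p0, hp0⟩ := exists_maxC A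
  obtain ⟨q0, hq0⟩ := exists_minC A
  obtain ⟨K, hKdef⟩ : ∃ K : ℤ, K = (m : ℤ) * ((n : ℤ) + 1) := ⟨_, rfl⟩
  have hKN : ((n : ℤ) + 1) ≤ K := by
    rw [hKdef]
    nlinarith [hNpos, (by exact_mod_cast hm : (1 : ℤ) ≤ (m : ℤ))]
  have hMm : maxC n A - minC n A = K := by
    have := height_mul hA; rw [hhA] at this; omega
  have hBm : maxC n B - minC n B = K := by
    have := height_mul hB; rw [hhB] at this; omega
  clear hKdef
  have hstep_up : ∀ i, A i ≠ maxC n A → A i ≤ maxC n A - ((n : ℤ) + 1) := by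
    intro i hi
    obtain ⟨k, hk⟩ : ((n : ℤ) + 1) ∣ maxC n A - A i := by
      rw [← hp0]; exact hA.2 p0 i
    have h1 : A i < maxC n A := lt_of_le_of_ne (le_maxC A i) hi
    have hk1 : 1 ≤ k := by nlinarith
    nlinarith
  have hstep_dn : ∀ i, A i ≠ minC n A → minC n A + ((n : ℤ) + 1) ≤ A i := by
    intro i hi
    obtain ⟨k, hk⟩ : ((n : ℤ) + 1) ∣ A i - minC n A := by
      rw [← hq0]; exact hA.2 i q0
    have h1 : minC n A < A i := lt_of_le_of_ne (minC_le A i) (Ne.symm hi)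
    have hk1 : 1 ≤ k := by nlinarith
    nlinarith
  have hBdef : B = A + eVec n S := by
    funext i
    have := congrFun hES i
    simp only [Pi.sub_apply] at this
    simp only [Pi.add_apply]
    omega
  have hBi : ∀ i, B i = A i + (if i ∈ S then (n : ℤ) + 1 - S.card else -(S.card : ℤ)) :=
    fun i => by rw [hBdef]; rfl
  by_cases hP : ∃ p, A p = maxC n A ∧ p ∈ S
  · -- Case: S contains an argmax; then S contains all argmins, shrink T = S minus argmaxes
    obtain ⟨p, hpM, hpS⟩ := hP
    have hQS : ∀ i, A i = minC n A → i ∈ S := by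
      intro q hqμ
      by_contra hqS
      have h1 : B p = maxC n A + ((n : ℤ) + 1) - S.card := by
        rw [hBi p, if_pos hpS, hpM]; ring
      have h2 : B q = minC n A - S.card := by
        rw [hBi q, if_neg hqS, hqμ]; ring
      have h3 := le_maxC B p
      have h4 := minC_le B q
      omega
    set T : Finset (Fin (n+1)) := S.filter (fun i => A i ≠ maxC n A) with hT
    have hTsub : T ⊆ S := Finset.filter_subset _ _
    have hTmax : ∀ i ∈ T, A i ≠ maxC n A := fun i hi => (Finset.mem_filter.1 hi).2
    have hμM : minC n A ≠ maxC n A := by omega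
    have hq0T : q0 ∈ T := Finset.mem_filter.2 ⟨hQS q0 hq0, by rw [hq0]; exact hμM⟩
    have hTmin : ∀ i, i ∉ T → A i ≠ minC n A := by
      intro i hi hiμ
      exact hi (Finset.mem_filter.2 ⟨hQS i hiμ, by rw [hiμ]; exact hμM⟩)
    have hTne : T.Nonempty := ⟨q0, hq0T⟩
    have hp0T : p0 ∉ T := fun h => hTmax p0 h hp0
    have hTuniv : T ≠ univ := fun h => hp0T (h ▸ mem_univ p0)
    obtain ⟨hCV, hCA, hCh⟩ := build hm hA hhA T hTne hTuniv hTmax hTmin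
    refine ⟨A + eVec n T, hCV, hCA, ?_, hCh⟩
    have h1 : (A + eVec n T) - B = -(eVec n (S \ T)) := by
      rw [hBdef, ← eVec_sub hTsub]
      abel
    rw [h1]
    have hpST : p ∈ S \ T := Finset.mem_sdiff.2 ⟨hpS, fun h => hTmax p h hpM⟩
    have hq0ST : q0 ∉ S \ T := fun h => (Finset.mem_sdiff.1 h).2 hq0T
    exact isEdge_neg (isEdge_eVec ⟨p, hpST⟩ (fun h => hq0ST (h ▸ mem_univ q0)))
  · -- Case: S avoids all argmaxes; then S misses some argmin, grow T = S plus argmins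
    push_neg at hP
    have hQnS : ∃ q, A q = minC n A ∧ q ∉ S := by
      by_contra h
      push_neg at h
      have hmax : maxC n B ≤ maxC n A - S.card := by
        apply maxC_le
        intro i
        rw [hBi i]
        split_ifs with hi
        · have : A i ≠ maxC n A := fun hh => hP i hh hi
          have := hstep_up i this
          omega
        · have := le_maxC A i
          omega
      have hmin : minC n A + ((n : ℤ) + 1) - S.card ≤ minC n B := by
        apply le_minC
        intro i
        rw [hBi i]
        split_ifs with hi
        · have := minC_le A i
          omega
        · have : A i ≠ minC n A := fun hh => hi (h i hh)
          have := hstep_dn i this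
          omega
      omega
    obtain ⟨q, hqμ, hqS⟩ := hQnS
    set T : Finset (Fin (n+1)) := S ∪ univ.filter (fun i => A i = minC n A) with hT
    have hSsub : S ⊆ T := Finset.subset_union_left
    have hμM : minC n A ≠ maxC n A := by omega
    have hTmax : ∀ i ∈ T, A i ≠ maxC n A := by
      intro i hi
      rcases Finset.mem_union.1 hi with h | h
      · exact fun hh => hP i hh h
      · have := (Finset.mem_filter.1 h).2
        rw [this]; exact hμM
    have hTmin : ∀ i, i ∉ T → A i ≠ minC n A := by
      intro i hi hiμ
      exact hi (Finset.mem_union.2 (Or.inr (Finset.mem_filter.2 ⟨mem_univ i, hiμ⟩)))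
    have hqT : q ∈ T := Finset.mem_union.2 (Or.inr (Finset.mem_filter.2 ⟨mem_univ q, hqμ⟩))
    have hTne : T.Nonempty := ⟨q, hqT⟩
    have hp0T : p0 ∉ T := fun h => hTmax p0 h hp0
    have hTuniv : T ≠ univ := fun h => hp0T (h ▸ mem_univ p0)
    obtain ⟨hCV, hCA, hCh⟩ := build hm hA hhA T hTne hTuniv hTmax hTmin
    refine ⟨A + eVec n T, hCV, hCA, ?_, hCh⟩
    have h1 : (A + eVec n T) - B = eVec n (T \ S) := by
      rw [hBdef, ← eVec_sub hSsub]
      abel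
    rw [h1]
    have hqTS : q ∈ T \ S := Finset.mem_sdiff.2 ⟨hqT, hqS⟩
    have hp0TS : p0 ∉ T \ S := fun h => hp0T (Finset.mem_sdiff.1 h).1
    exact isEdge_eVec ⟨q, hqTS⟩ (fun h => hp0TS (h ▸ mem_univ p0))
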